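/- arXiv:1603.02105 — 2 statements merged into one kernel-verified Lean document; each statement's English description precedes it below -/
import Mathlib

section
/- Let B be a unital C*-algebra, regarded as a Banach space, with canonical isometric embedding ι : B → B** into its double dual. For a, c ∈ B let M_{a,c} : B → B be the bounded linear map x ↦ a x + x c, and let M_{a,c}** : B** → B** denote its double transpose. Fix m ≥ 1, n ≥ 0, elements a_j, c_j, b_j ∈ B for 1 ≤ j ≤ m, elements a′_k, c′_k ∈ B and reals r_k ≥ 0 for 1 ≤ k ≤ n. Define γ(x) = max_{1≤j≤m} ‖a_j x + x c_j − b_j‖ + max_{1≤k≤n} max(r_k − ‖a′_k x + x c′_k‖, 0) for x ∈ B, and define γ**(X) = max_{1≤j≤m} ‖M_{a_j,c_j}**(X) − ι(b_j)‖ + max_{1≤k≤n} max(r_k − ‖M_{a′_k,c′_k}**(X)‖, 0) for X ∈ B**. Then the infimum of γ over the closed unit ball of B equals 0 if and only if the infimum of γ** over the closed unit ball of B** equals 0. -/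
open NormedSpace

/-- The transpose (Banach-space adjoint) of a bounded linear map, `f ↦ f ∘ T`. -/
noncomputable def clmTranspose {E F : Type*}
    [NormedAddCommGroup E] [NormedSpace ℂ E] [NormedAddCommGroup F] [NormedSpace ℂ F]
    (T : E →L[ℂ] F) : StrongDual ℂ F →L[ℂ] StrongDual ℂ E :=
  (ContinuousLinearMap.compL ℂ E F ℂ).flip T

/-- The double transpose `T** : E** → F**` of a bounded linear map `T : E → F`. -/
noncomputable def clmDoubleTranspose {E F : Type*}
    [NormedAddCommGroup E] [NormedSpace ℂ E] [NormedAddCommGroup F] [NormedSpace ℂ F]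
    (T : E →L[ℂ] F) : StrongDual ℂ (StrongDual ℂ E) →L[ℂ] StrongDual ℂ (StrongDual ℂ F) :=
  clmTranspose (clmTranspose T)

/-- For `a, c` in a unital C*-algebra `B`, the bounded linear map `x ↦ a * x + x * c`. -/
noncomputable def mulLinMap {B : Type*} [CStarAlgebra B] (a c : B) : B →L[ℂ] B :=
  ContinuousLinearMap.mul ℂ B a + (ContinuousLinearMap.mul ℂ B).flip c

namespace Stmt5Aux

open NormedSpace Metric Finset


variable {E : Type*} [NormedAddCommGroup E] [NormedSpace ℂ E]
variable {F : Type*} [NormedAddCommGroup F] [NormedSpace ℂ F]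

lemma clmTranspose_apply (T : E →L[ℂ] F) (f : StrongDual ℂ F) : clmTranspose T f = f.comp T := rfl

lemma clmDoubleTranspose_apply (T : E →L[ℂ] F) (X : StrongDual ℂ (StrongDual ℂ E)) (f : StrongDual ℂ F) :
    clmDoubleTranspose T X f = X (f.comp T) := rfl

lemma dd_incl (T : E →L[ℂ] F) (x : E) :
    clmDoubleTranspose T (inclusionInDoubleDual ℂ E x) = inclusionInDoubleDual ℂ F (T x) := by
  ext φ; rfl

lemma norm_incl (x : E) : ‖inclusionInDoubleDual ℂ E x‖ = ‖x‖ := by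
  exact (inclusionInDoubleDualLi ℂ (E := E)).norm_map x

lemma conj_div_norm_mul (z : ℂ) (hz : z ≠ 0) :
    ((starRingEnd ℂ) z / (‖z‖ : ℂ)) * z = (‖z‖ : ℂ) := by
  have hz' : (‖z‖ : ℂ) ≠ 0 := by exact_mod_cast norm_ne_zero_iff.2 hz
  have h1 : (starRingEnd ℂ) z * z = ((‖z‖ : ℂ)) ^ 2 := by
    rw [mul_comm, Complex.mul_conj]
    norm_cast
    rw [Complex.normSq_eq_norm_sq]
  rw [div_mul_eq_mul_div, h1, sq, mul_div_assoc, div_self hz', mul_one]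

/-- choose an almost-norming functional with real value. -/
lemma exists_re_lt {D : Type*} [NormedAddCommGroup D] [NormedSpace ℂ D]
    (Y : D →L[ℂ] ℂ) {δ : ℝ} (hδ : 0 < δ) :
    ∃ φ : D, ‖φ‖ ≤ 1 ∧ ‖Y‖ - δ < (Y φ).re := by
  obtain ⟨ψ, hψ1, hψ2⟩ := Y.exists_lt_apply_of_lt_opNorm (sub_lt_self ‖Y‖ hδ)
  rcases eq_or_ne (Y ψ) 0 with h0 | h0
  · refine ⟨0, by simp, ?_⟩
    rw [h0] at hψ2
    simp only [norm_zero] at hψ2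
    simpa using hψ2
  · refine ⟨((starRingEnd ℂ) (Y ψ) / (‖Y ψ‖ : ℂ)) • ψ, ?_, ?_⟩
    · rw [norm_smul, norm_div]
      simp only [RCLike.norm_conj]
      rw [Complex.norm_real, Real.norm_eq_abs, abs_of_nonneg (norm_nonneg _),
        div_self (norm_ne_zero_iff.2 h0), one_mul]
      exact hψ1.le
    · rw [map_smul, smul_eq_mul, conj_div_norm_mul _ h0]
      simpa using hψ2

lemma opNorm_le_of_re_le {g : E →L[ℂ] ℂ} {β : ℝ} (h : ∀ x, ‖x‖ < 1 → (g x).re ≤ β) :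
    ‖g‖ ≤ β := by
  by_contra hc
  push_neg at hc
  obtain ⟨x, hx1, hx2⟩ := g.exists_lt_apply_of_lt_opNorm hc
  rcases eq_or_ne (g x) 0 with h0 | h0
  · rw [h0] at hx2
    have h00 := h 0 (by simp)
    simp only [norm_zero] at hx2
    simp only [map_zero, Complex.zero_re] at h00
    linarith
  · have hy : ‖((starRingEnd ℂ) (g x) / (‖g x‖ : ℂ)) • x‖ < 1 := by
      rw [norm_smul, norm_div]
      simp only [RCLike.norm_conj]
      rw [Complex.norm_real, Real.norm_eq_abs, abs_of_nonneg (norm_nonneg _),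
        div_self (norm_ne_zero_iff.2 h0), one_mul]
      exact hx1
    have := h _ hy
    rw [map_smul, smul_eq_mul, conj_div_norm_mul _ h0] at this
    simp only [Complex.ofReal_re] at this
    linarith

lemma exists_norm_lt_lt {D : Type*} [NormedAddCommGroup D] [NormedSpace ℝ D]
    (φ : D →L[ℝ] ℝ) {cr η : ℝ} (hc : 0 < cr) (hη : 0 < η) :
    ∃ u : D, ‖u‖ < cr ∧ cr * ‖φ‖ - η < φ u := by
  rcases lt_or_ge (cr * ‖φ‖) η with h | h
  · exact ⟨0, by simpa using hc, by simpa using h⟩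
  · have hr : ‖φ‖ - η / cr < ‖φ‖ := sub_lt_self _ (div_pos hη hc)
    obtain ⟨v, hv1, hv2⟩ := φ.exists_lt_apply_of_lt_opNorm hr
    rw [Real.norm_eq_abs] at hv2
    rcases le_or_gt 0 (φ v) with hpv | hpv
    · refine ⟨cr • v, ?_, ?_⟩
      · rw [norm_smul, Real.norm_eq_abs, abs_of_pos hc]
        calc cr * ‖v‖ < cr * 1 := by exact mul_lt_mul_of_pos_left hv1 hc
          _ = cr := mul_one _
      · rw [map_smul, smul_eq_mul]
        rw [abs_of_nonneg hpv] at hv2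
        have h2 := mul_lt_mul_of_pos_left hv2 hc
        have h3 : cr * (η / cr) = η := mul_div_cancel₀ _ hc.ne'
        rw [mul_sub, h3] at h2
        linarith
    · refine ⟨cr • (-v), ?_, ?_⟩
      · rw [norm_smul, Real.norm_eq_abs, abs_of_pos hc, norm_neg]
        calc cr * ‖v‖ < cr * 1 := by exact mul_lt_mul_of_pos_left hv1 hc
          _ = cr := mul_one _
      · rw [map_smul, map_neg, smul_eq_mul]
        rw [abs_of_neg hpv] at hv2
        have h2 := mul_lt_mul_of_pos_left hv2 hc
        have h3 : cr * (η / cr) = η := mul_div_cancel₀ _ hc.ne'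
        rw [mul_sub, h3] at h2
        linarith

lemma dd_dual_apply_eq (g : StrongDual ℂ E) (X : StrongDual ℂ (StrongDual ℂ E)) :
    clmDoubleTranspose g X = inclusionInDoubleDual ℂ ℂ (X g) := by
  ext φ
  have hφ : ∀ z : ℂ, φ z = z * φ 1 := by
    intro z
    conv_lhs => rw [show z = z • (1 : ℂ) by simp]
    rw [map_smul, smul_eq_mul]
  have hcomp : φ.comp g = φ 1 • g := by
    ext x
    simp only [ContinuousLinearMap.comp_apply, ContinuousLinearMap.smul_apply, smul_eq_mul]
    rw [hφ (g x), mul_comm]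
  rw [clmDoubleTranspose_apply, hcomp, map_smul, smul_eq_mul, dual_def, hφ (X g), mul_comm]

lemma dd_comp {E F G : Type*} [NormedAddCommGroup E] [NormedSpace ℂ E]
    [NormedAddCommGroup F] [NormedSpace ℂ F] [NormedAddCommGroup G] [NormedSpace ℂ G]
    (S : F →L[ℂ] G) (R : E →L[ℂ] F) (X : StrongDual ℂ (StrongDual ℂ E)) :
    clmDoubleTranspose (S.comp R) X = clmDoubleTranspose S (clmDoubleTranspose R X) := by
  ext φ; rfl

lemma sInf_image_eq_zero_iff {α : Type*} {γ : α → ℝ} {s : Set α} (hs : s.Nonempty)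
    (hnn : ∀ x ∈ s, 0 ≤ γ x) :
    sInf (γ '' s) = 0 ↔ ∀ ε > 0, ∃ x ∈ s, γ x < ε := by
  constructor
  · intro h ε hε
    by_contra hcon
    push_neg at hcon
    have : ε ≤ sInf (γ '' s) := le_csInf (hs.image γ) (by rintro y ⟨x, hx, rfl⟩; exact hcon x hx)
    rw [h] at this; linarith
  · intro h
    have h1 : 0 ≤ sInf (γ '' s) :=
      le_csInf (hs.image γ) (by rintro y ⟨x, hx, rfl⟩; exact hnn x hx)
    have h2 : sInf (γ '' s) ≤ 0 := by
      by_contra hc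
      push_neg at hc
      obtain ⟨x, hx, hlt⟩ := h _ hc
      have hb : BddBelow (γ '' s) := ⟨0, by rintro y ⟨z, hz, rfl⟩; exact hnn z hz⟩
      have := csInf_le hb (Set.mem_image_of_mem γ hx)
      linarith
    linarith



open NormedSpace Metric Finset

lemma key {E : Type*} [NormedAddCommGroup E] [NormedSpace ℂ E]
    {ι : Type*} [Fintype ι] [DecidableEq ι] {F : ι → Type*}
    [∀ i, NormedAddCommGroup (F i)] [∀ i, NormedSpace ℂ (F i)]
    (T : ∀ i, E →L[ℂ] F i) (b : ∀ i, F i) (t : ι → ℝ)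
    (X : StrongDual ℂ (StrongDual ℂ E)) (hX : ‖X‖ ≤ 1)
    (ht : ∀ i, ‖clmDoubleTranspose (T i) X - inclusionInDoubleDual ℂ (F i) (b i)‖ ≤ t i)
    {ε : ℝ} (hε : 0 < ε) :
    ∃ x : E, ‖x‖ < 1 ∧ ∀ i, ‖T i x - b i‖ < t i + ε := by
  by_contra hcon
  push_neg at hcon
  have ht0 : ∀ i, 0 ≤ t i := fun i => le_trans (ContinuousLinearMap.opNorm_nonneg _) (ht i)
  have htε : ∀ i, 0 < t i + ε := fun i => add_pos_of_nonneg_of_pos (ht0 i) hε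
  set A : Set (∀ i, F i) :=
    ⋃ x ∈ ball (0 : E) 1, Set.univ.pi fun i => ball (T i x - b i) (t i + ε) with hA
  have hmem_iff : ∀ p : ∀ i, F i,
      p ∈ A ↔ ∃ x, ‖x‖ < 1 ∧ ∀ i, ‖p i - (T i x - b i)‖ < t i + ε := by
    intro p
    simp only [hA, Set.mem_iUnion, Set.mem_pi, Set.mem_univ, true_implies, mem_ball,
      mem_ball_zero_iff, dist_eq_norm, exists_prop, sub_zero]
  have hconv : Convex ℝ A := by
    intro p hp q hq θ τ hθ hτ hθτ
    rw [hmem_iff] at hp hq ⊢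
    obtain ⟨x₁, hx₁, hp⟩ := hp
    obtain ⟨x₂, hx₂, hq⟩ := hq
    rcases eq_or_lt_of_le hθ with h0 | hθ'
    · have hτ1 : τ = 1 := by linarith
      exact ⟨x₂, hx₂, fun i => by simpa [← h0, hτ1] using hq i⟩
    rcases eq_or_lt_of_le hτ with h0 | hτ'
    · have hθ1 : θ = 1 := by linarith
      exact ⟨x₁, hx₁, fun i => by simpa [← h0, hθ1] using hp i⟩
    refine ⟨θ • x₁ + τ • x₂, ?_, fun i => ?_⟩
    · calc ‖θ • x₁ + τ • x₂‖ ≤ ‖θ • x₁‖ + ‖τ • x₂‖ := norm_add_le _ _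
        _ = θ * ‖x₁‖ + τ * ‖x₂‖ := by
          rw [norm_smul, norm_smul, Real.norm_eq_abs, Real.norm_eq_abs,
            abs_of_pos hθ', abs_of_pos hτ']
        _ < θ * 1 + τ * 1 :=
          add_lt_add (mul_lt_mul_of_pos_left hx₁ hθ') (mul_lt_mul_of_pos_left hx₂ hτ')
        _ = 1 := by linarith
    · have hb : b i = θ • b i + τ • b i := by rw [← add_smul, hθτ, one_smul]
      have hT : T i (θ • x₁ + τ • x₂) = θ • T i x₁ + τ • T i x₂ := by
        rw [map_add, ContinuousLinearMap.map_smul_of_tower, ContinuousLinearMap.map_smul_of_tower]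
      have hrw : (θ • p + τ • q) i - (T i (θ • x₁ + τ • x₂) - b i)
          = θ • (p i - (T i x₁ - b i)) + τ • (q i - (T i x₂ - b i)) := by
        rw [hT]
        conv_lhs => rw [hb]
        simp only [Pi.add_apply, Pi.smul_apply]
        module
      rw [hrw]
      calc ‖θ • (p i - (T i x₁ - b i)) + τ • (q i - (T i x₂ - b i))‖
          ≤ θ * ‖p i - (T i x₁ - b i)‖ + τ * ‖q i - (T i x₂ - b i)‖ := by
            refine (norm_add_le _ _).trans (le_of_eq ?_)
            rw [norm_smul, norm_smul, Real.norm_eq_abs, Real.norm_eq_abs,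
              abs_of_pos hθ', abs_of_pos hτ']
        _ < θ * (t i + ε) + τ * (t i + ε) :=
          add_lt_add (mul_lt_mul_of_pos_left (hp i) hθ') (mul_lt_mul_of_pos_left (hq i) hτ')
        _ = t i + ε := by rw [← add_mul, hθτ, one_mul]
  have hAopen : IsOpen A :=
    isOpen_biUnion fun x _ => isOpen_set_pi Set.finite_univ fun i _ => isOpen_ball
  have h0A : (0 : ∀ i, F i) ∉ A := by
    rw [hmem_iff]
    rintro ⟨x, hx, hmem⟩
    obtain ⟨i, hi⟩ := hcon x hx
    have := hmem i
    rw [Pi.zero_apply, zero_sub, norm_neg] at this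
    linarith
  obtain ⟨L, hL⟩ := geometric_hahn_banach_open_point hconv hAopen h0A
  have hL0 : ∀ p ∈ A, L p < 0 := by
    intro p hp
    have := hL p hp
    rwa [map_zero] at this
  -- decompose L
  let sg : ∀ i, F i →L[ℝ] (∀ i, F i) := fun i =>
    { toLinearMap := LinearMap.single ℝ F i, cont := continuous_single i }
  let hR : ∀ i, F i →L[ℝ] ℝ := fun i => L.comp (sg i)
  have hLdec : ∀ y : ∀ i, F i, L y = ∑ i, hR i (y i) := by
    intro y
    have hy : y = ∑ i, Pi.single i (y i) := by
      ext j
      rw [Finset.sum_apply]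
      exact (Fintype.sum_pi_single j y).symm
    conv_lhs => rw [hy]
    rw [map_sum]
    rfl
  let hℂ : ∀ i, F i →L[ℂ] ℂ := fun i => (hR i).extendTo𝕜'
  have hre : ∀ i z, ((hℂ i) z).re = hR i z := by
    intro i z
    rw [show (hℂ i) z = ((hR i z : ℝ) : ℂ) - Complex.I * ((hR i (Complex.I • z) : ℝ) : ℂ) from
      ContinuousLinearMap.extendTo𝕜'_apply (hR i) z]
    simp
  have hnorm : ∀ i, ‖hℂ i‖ = ‖hR i‖ := fun i => ContinuousLinearMap.norm_extendTo𝕜' _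
  let G : E →L[ℂ] ℂ := ∑ i, (hℂ i).comp (T i)
  -- step: sup over open unit ball
  have hG : ∀ x, ‖x‖ < 1 → (G x).re ≤ (∑ i, hR i (b i)) - ∑ i, (t i + ε) * ‖hR i‖ := by
    intro x hx
    refine le_of_forall_pos_le_add ?_
    intro η hη
    have hcard : (0 : ℝ) < Fintype.card ι + 1 := by positivity
    set η' := η / (Fintype.card ι + 1) with hη'def
    have hη' : 0 < η' := by positivity
    choose u hu1 hu2 using fun i => exists_norm_lt_lt (hR i) (htε i) hη'
    have hmem : (fun i => T i x - b i + u i) ∈ A := by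
      rw [hmem_iff]
      exact ⟨x, hx, fun i => by simpa using hu1 i⟩
    have hlt := hL0 _ hmem
    rw [hLdec] at hlt
    have hsplit : ∀ i, hR i (T i x - b i + u i) = hR i (T i x) - hR i (b i) + hR i (u i) := by
      intro i; rw [map_add, map_sub]
    rw [Finset.sum_congr rfl fun i _ => hsplit i] at hlt
    rw [Finset.sum_add_distrib, Finset.sum_sub_distrib] at hlt
    have hsum_u : ∑ i, ((t i + ε) * ‖hR i‖ - η') ≤ ∑ i, hR i (u i) :=
      Finset.sum_le_sum fun i _ => (hu2 i).le
    rw [Finset.sum_sub_distrib, Finset.sum_const, Finset.card_univ, nsmul_eq_mul] at hsum_u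
    have hcard_le : (Fintype.card ι : ℝ) * η' ≤ η := by
      rw [hη'def, mul_div_assoc']
      rw [div_le_iff₀ hcard]
      nlinarith [Nat.cast_nonneg (α := ℝ) (Fintype.card ι)]
    have hGx : (G x).re = ∑ i, hR i (T i x) := by
      have h1 : G x = ∑ i, hℂ i (T i x) := by
        rw [show G = ∑ i, (hℂ i).comp (T i) from rfl, ContinuousLinearMap.sum_apply]
        rfl
      rw [h1, Complex.re_sum]
      exact Finset.sum_congr rfl fun i _ => hre i _
    rw [hGx]
    linarith
  have hGnorm : ‖G‖ ≤ (∑ i, hR i (b i)) - ∑ i, (t i + ε) * ‖hR i‖ := opNorm_le_of_re_le hG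
  have hup : (X G).re ≤ ‖G‖ := by
    calc (X G).re ≤ ‖X G‖ := Complex.re_le_norm _
      _ ≤ ‖X‖ * ‖G‖ := X.le_opNorm G
      _ ≤ 1 * ‖G‖ := mul_le_mul_of_nonneg_right hX (norm_nonneg _)
      _ = ‖G‖ := one_mul _
  have hlow : (∑ i, hR i (b i)) - ∑ i, t i * ‖hR i‖ ≤ (X G).re := by
    have hXG : X G = ∑ i, clmDoubleTranspose (T i) X (hℂ i) := by
      rw [show G = ∑ i, (hℂ i).comp (T i) from rfl, map_sum]
      exact Finset.sum_congr rfl fun i _ => rfl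
    rw [hXG, Complex.re_sum, ← Finset.sum_sub_distrib]
    refine Finset.sum_le_sum fun i _ => ?_
    have hsplit : clmDoubleTranspose (T i) X (hℂ i)
        = (clmDoubleTranspose (T i) X - inclusionInDoubleDual ℂ (F i) (b i)) (hℂ i)
          + (inclusionInDoubleDual ℂ (F i) (b i)) (hℂ i) := by
      rw [ContinuousLinearMap.sub_apply]; ring
    rw [hsplit, Complex.add_re]
    have h2 : (inclusionInDoubleDual ℂ (F i) (b i) (hℂ i)).re = hR i (b i) := by
      rw [dual_def]; exact hre i _
    rw [h2]
    have h4 : ‖(clmDoubleTranspose (T i) X - inclusionInDoubleDual ℂ (F i) (b i)) (hℂ i)‖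
        ≤ t i * ‖hR i‖ := by
      calc ‖(clmDoubleTranspose (T i) X - inclusionInDoubleDual ℂ (F i) (b i)) (hℂ i)‖
          ≤ ‖clmDoubleTranspose (T i) X - inclusionInDoubleDual ℂ (F i) (b i)‖ * ‖hℂ i‖ :=
            ContinuousLinearMap.le_opNorm _ _
        _ ≤ t i * ‖hR i‖ := by
            rw [hnorm i]
            exact mul_le_mul_of_nonneg_right (ht i) (norm_nonneg _)
    have h5 := Complex.abs_re_le_norm ((clmDoubleTranspose (T i) X
      - inclusionInDoubleDual ℂ (F i) (b i)) (hℂ i))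
    have h6 := abs_le.1 (h5.trans h4)
    linarith [h6.1]
  have hε0 : ∑ i, ε * ‖hR i‖ ≤ 0 := by
    have h1 := hlow.trans (hup.trans hGnorm)
    have h2 : ∑ i, ε * ‖hR i‖ = ∑ i, (t i + ε) * ‖hR i‖ - ∑ i, t i * ‖hR i‖ := by
      rw [← Finset.sum_sub_distrib]
      exact Finset.sum_congr rfl fun i _ => by ring
    linarith
  have hRzero : ∀ i, hR i = 0 := by
    intro i
    have hterm : ∀ j ∈ Finset.univ, (0:ℝ) ≤ ε * ‖hR j‖ := fun j _ => by positivity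
    have h6 := (Finset.sum_eq_zero_iff_of_nonneg hterm).1
      (le_antisymm hε0 (Finset.sum_nonneg hterm)) i (Finset.mem_univ i)
    have h7 : ‖hR i‖ = 0 := by
      rcases mul_eq_zero.1 h6 with h | h
      · exact absurd h hε.ne'
      · exact h
    exact norm_eq_zero.1 h7
  have hmem0 : (fun i => T i 0 - b i) ∈ A := by
    rw [hmem_iff]
    exact ⟨0, by simp, fun i => by simpa using htε i⟩
  have hfin := hL0 _ hmem0
  rw [hLdec] at hfin
  rw [Finset.sum_eq_zero fun i _ => by rw [hRzero i]; rfl] at hfin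
  exact lt_irrefl 0 hfin



lemma mulLinMap_apply {B : Type*} [CStarAlgebra B] (a c x : B) :
    mulLinMap a c x = a * x + x * c := by
  simp [mulLinMap, ContinuousLinearMap.mul_apply']


end Stmt5Aux

/-- For a unital C*-algebra `B` and a "restricted `B`-linear formula"
`γ(x) = max_j ‖a_j x + x c_j - b_j‖ + max_k max(r_k - ‖a'_k x + x c'_k‖, 0)`
(with `m ≥ 1`, `n ≥ 0`; the second maximum is `0` when `n = 0`), the infimum of `γ` over the
closed unit ball of `B` is `0` if and only if the infimum over the closed unit ball of `B**`
of the corresponding expression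
`γ**(X) = max_j ‖M_{a_j,c_j}**(X) - ι(b_j)‖ + max_k max(r_k - ‖M_{a'_k,c'_k}**(X)‖, 0)`
is `0`. -/
theorem stmt_5 (B : Type*) [CStarAlgebra B]
    (m n : ℕ) (hm : 1 ≤ m)
    (a c b : Fin m → B) (a' c' : Fin n → B) (r : Fin n → ℝ) (hr : ∀ k, 0 ≤ r k) :
    sInf ((fun x : B =>
        (⨆ j : Fin m, ‖a j * x + x * c j - b j‖) +
          ⨆ k : Fin n, max (r k - ‖a' k * x + x * c' k‖) 0) ''
      Metric.closedBall (0 : B) 1) = 0 ↔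
    sInf ((fun X : StrongDual ℂ (StrongDual ℂ B) =>
        (⨆ j : Fin m, ‖clmDoubleTranspose (mulLinMap (a j) (c j)) X -
            inclusionInDoubleDual ℂ B (b j)‖) +
          ⨆ k : Fin n, max (r k - ‖clmDoubleTranspose (mulLinMap (a' k) (c' k)) X‖) 0) ''
      Metric.closedBall (0 : StrongDual ℂ (StrongDual ℂ B)) 1) = 0 := by
  classical
  have hne : Nonempty (Fin m) := ⟨⟨0, hm⟩⟩
  have hball : (Metric.closedBall (0:B) 1).Nonempty := ⟨0, Metric.mem_closedBall_self zero_le_one⟩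
  have hball' : (Metric.closedBall (0 : StrongDual ℂ (StrongDual ℂ B)) 1).Nonempty :=
    ⟨0, Metric.mem_closedBall_self zero_le_one⟩
  rcases subsingleton_or_nontrivial B with hsub | hnt
  · have hfun1 : (fun x : B =>
        (⨆ j : Fin m, ‖a j * x + x * c j - b j‖) +
          ⨆ k : Fin n, max (r k - ‖a' k * x + x * c' k‖) 0) =
        fun _ => (⨆ _ : Fin m, (0:ℝ)) + ⨆ k : Fin n, max (r k - 0) 0 := by
      funext x
      congr 1
      · exact iSup_congr fun j => by
          rw [Subsingleton.elim (a j * x + x * c j - b j) 0, norm_zero]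
      · exact iSup_congr fun k => by
          rw [Subsingleton.elim (a' k * x + x * c' k) 0, norm_zero]
    have hfun2 : (fun X : StrongDual ℂ (StrongDual ℂ B) =>
        (⨆ j : Fin m, ‖clmDoubleTranspose (mulLinMap (a j) (c j)) X -
            inclusionInDoubleDual ℂ B (b j)‖) +
          ⨆ k : Fin n, max (r k - ‖clmDoubleTranspose (mulLinMap (a' k) (c' k)) X‖) 0) =
        fun _ => (⨆ _ : Fin m, (0:ℝ)) + ⨆ k : Fin n, max (r k - 0) 0 := by
      funext X
      congr 1
      · exact iSup_congr fun j => by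
          rw [Subsingleton.elim (clmDoubleTranspose (mulLinMap (a j) (c j)) X -
            inclusionInDoubleDual ℂ B (b j)) 0, ContinuousLinearMap.opNorm_zero]
      · exact iSup_congr fun k => by
          rw [Subsingleton.elim (clmDoubleTranspose (mulLinMap (a' k) (c' k)) X) 0, ContinuousLinearMap.opNorm_zero]
    rw [hfun1, hfun2, Set.Nonempty.image_const hball, Set.Nonempty.image_const hball']
  have hγnn : ∀ x ∈ Metric.closedBall (0:B) 1, 0 ≤
      (⨆ j : Fin m, ‖a j * x + x * c j - b j‖) +
        ⨆ k : Fin n, max (r k - ‖a' k * x + x * c' k‖) 0 :=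
    fun x _ => add_nonneg (Real.iSup_nonneg fun j => norm_nonneg _)
      (Real.iSup_nonneg fun k => le_max_right _ _)
  have hΓnn : ∀ X ∈ Metric.closedBall (0 : StrongDual ℂ (StrongDual ℂ B)) 1, 0 ≤
      (⨆ j : Fin m, ‖clmDoubleTranspose (mulLinMap (a j) (c j)) X -
          inclusionInDoubleDual ℂ B (b j)‖) +
        ⨆ k : Fin n, max (r k - ‖clmDoubleTranspose (mulLinMap (a' k) (c' k)) X‖) 0 :=
    fun X _ => add_nonneg (Real.iSup_nonneg fun j => ContinuousLinearMap.opNorm_nonneg _)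
      (Real.iSup_nonneg fun k => le_max_right _ _)
  rw [Stmt5Aux.sInf_image_eq_zero_iff hball hγnn,
    Stmt5Aux.sInf_image_eq_zero_iff hball' hΓnn]
  constructor
  · -- easy direction
    intro h ε hε
    obtain ⟨x, hx, hlt⟩ := h ε hε
    refine ⟨inclusionInDoubleDual ℂ B x, ?_, ?_⟩
    · rw [mem_closedBall_zero_iff (E := StrongDual ℂ (StrongDual ℂ B)), Stmt5Aux.norm_incl]
      exact mem_closedBall_zero_iff.1 hx
    · have e1 : ∀ j : Fin m,
          ‖clmDoubleTranspose (mulLinMap (a j) (c j)) (inclusionInDoubleDual ℂ B x) -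
            inclusionInDoubleDual ℂ B (b j)‖ = ‖a j * x + x * c j - b j‖ := by
        intro j
        rw [Stmt5Aux.dd_incl, ← map_sub (inclusionInDoubleDual ℂ B), Stmt5Aux.norm_incl, Stmt5Aux.mulLinMap_apply]
      have e2 : ∀ k : Fin n,
          ‖clmDoubleTranspose (mulLinMap (a' k) (c' k)) (inclusionInDoubleDual ℂ B x)‖ =
            ‖a' k * x + x * c' k‖ := by
        intro k
        rw [Stmt5Aux.dd_incl, Stmt5Aux.norm_incl, Stmt5Aux.mulLinMap_apply]
      show (⨆ j : Fin m, ‖clmDoubleTranspose (mulLinMap (a j) (c j))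
            (inclusionInDoubleDual ℂ B x) - inclusionInDoubleDual ℂ B (b j)‖) +
          (⨆ k : Fin n, max (r k - ‖clmDoubleTranspose (mulLinMap (a' k) (c' k))
            (inclusionInDoubleDual ℂ B x)‖) 0) < ε
      have heq1 : (⨆ j : Fin m, ‖clmDoubleTranspose (mulLinMap (a j) (c j))
            (inclusionInDoubleDual ℂ B x) - inclusionInDoubleDual ℂ B (b j)‖) =
          ⨆ j : Fin m, ‖a j * x + x * c j - b j‖ := iSup_congr e1
      have heq2 : (⨆ k : Fin n, max (r k - ‖clmDoubleTranspose (mulLinMap (a' k) (c' k))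
            (inclusionInDoubleDual ℂ B x)‖) 0) =
          ⨆ k : Fin n, max (r k - ‖a' k * x + x * c' k‖) 0 :=
        iSup_congr fun k => by rw [e2 k]
      rw [heq1, heq2]
      exact hlt
  · -- hard direction
    intro h ε hε
    obtain ⟨X, hXmem, hΓ⟩ := h (ε/2) (by positivity)
    have hX : ‖X‖ ≤ 1 := (mem_closedBall_zero_iff (E := StrongDual ℂ (StrongDual ℂ B))).1 hXmem
    have hδ : (0:ℝ) < ε/6 := by positivity
    choose φ hφ1 hφ2 using fun k : Fin n =>
      Stmt5Aux.exists_re_lt (clmDoubleTranspose (mulLinMap (a' k) (c' k)) X) hδ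
    obtain ⟨x, hx1, hx2⟩ := Stmt5Aux.key (E := B) (ι := Fin m ⊕ Fin n)
      (F := fun _ => B)
      (fun i => Sum.rec (fun j => mulLinMap (a j) (c j))
        (fun k => ((ContinuousLinearMap.id ℂ ℂ).smulRight (1 : B)).comp
          ((φ k).comp (mulLinMap (a' k) (c' k)))) i)
      (fun i => Sum.rec (fun j => b j)
        (fun k => X ((φ k).comp (mulLinMap (a' k) (c' k))) • (1 : B)) i)
      (fun i => Sum.rec (fun j => ‖clmDoubleTranspose (mulLinMap (a j) (c j)) X -
        inclusionInDoubleDual ℂ B (b j)‖) (fun _ => 0) i)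
      X hX (by
      rintro (j | k)
      · exact le_rfl
      · show ‖clmDoubleTranspose (((ContinuousLinearMap.id ℂ ℂ).smulRight (1 : B)).comp
            ((φ k).comp (mulLinMap (a' k) (c' k)))) X -
          inclusionInDoubleDual ℂ B (X ((φ k).comp (mulLinMap (a' k) (c' k))) • (1 : B))‖ ≤ 0
        rw [Stmt5Aux.dd_comp, Stmt5Aux.dd_dual_apply_eq, Stmt5Aux.dd_incl]
        have e : ((ContinuousLinearMap.id ℂ ℂ).smulRight (1 : B))
            (X ((φ k).comp (mulLinMap (a' k) (c' k)))) =
            X ((φ k).comp (mulLinMap (a' k) (c' k))) • (1 : B) := rfl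
        rw [e]; exact ContinuousLinearMap.opNorm_le_bound _ le_rfl fun ψ => by simp) hδ
    refine ⟨x, mem_closedBall_zero_iff.2 hx1.le, ?_⟩
    show (⨆ j : Fin m, ‖a j * x + x * c j - b j‖) +
        (⨆ k : Fin n, max (r k - ‖a' k * x + x * c' k‖) 0) < ε
    have hΓ' : (⨆ j : Fin m, ‖clmDoubleTranspose (mulLinMap (a j) (c j)) X -
          inclusionInDoubleDual ℂ B (b j)‖) +
        (⨆ k : Fin n, max (r k - ‖clmDoubleTranspose (mulLinMap (a' k) (c' k)) X‖) 0) < ε/2 := hΓ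
    have hA1 : (⨆ j : Fin m, ‖a j * x + x * c j - b j‖) ≤
        (⨆ j : Fin m, ‖clmDoubleTranspose (mulLinMap (a j) (c j)) X -
          inclusionInDoubleDual ℂ B (b j)‖) + ε/6 := by
      refine ciSup_le fun j => ?_
      have h1 : ‖mulLinMap (a j) (c j) x - b j‖ <
          ‖clmDoubleTranspose (mulLinMap (a j) (c j)) X -
            inclusionInDoubleDual ℂ B (b j)‖ + ε/6 := hx2 (Sum.inl j)
      rw [Stmt5Aux.mulLinMap_apply] at h1
      refine h1.le.trans (add_le_add_left ?_ _)
      exact le_ciSup (f := fun j : Fin m => ‖clmDoubleTranspose (mulLinMap (a j) (c j)) X -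
        inclusionInDoubleDual ℂ B (b j)‖) (Set.Finite.bddAbove (Set.finite_range _)) j
    have hA2 : (⨆ k : Fin n, max (r k - ‖a' k * x + x * c' k‖) 0) ≤
        (⨆ k : Fin n, max (r k - ‖clmDoubleTranspose (mulLinMap (a' k) (c' k)) X‖) 0)
          + 2*(ε/6) := by
      refine Real.iSup_le (fun k => ?_) ?_
      swap
      · have h0 : (0:ℝ) ≤ ⨆ k : Fin n,
            max (r k - ‖clmDoubleTranspose (mulLinMap (a' k) (c' k)) X‖) 0 :=
          Real.iSup_nonneg fun k => le_max_right _ _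
        linarith
      have h2 : ‖(((ContinuousLinearMap.id ℂ ℂ).smulRight (1 : B)).comp
            ((φ k).comp (mulLinMap (a' k) (c' k)))) x -
          X ((φ k).comp (mulLinMap (a' k) (c' k))) • (1 : B)‖ < 0 + ε/6 := hx2 (Sum.inr k)
      have e2' : (((ContinuousLinearMap.id ℂ ℂ).smulRight (1 : B)).comp
            ((φ k).comp (mulLinMap (a' k) (c' k)))) x -
            X ((φ k).comp (mulLinMap (a' k) (c' k))) • (1 : B) =
          ((φ k).comp (mulLinMap (a' k) (c' k)) x -
            X ((φ k).comp (mulLinMap (a' k) (c' k)))) • (1 : B) := by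
        rw [sub_smul]
        rfl
      rw [e2', norm_smul, norm_one, mul_one, zero_add] at h2
      have h2 : ‖(φ k).comp (mulLinMap (a' k) (c' k)) x -
          X ((φ k).comp (mulLinMap (a' k) (c' k)))‖ < ε/6 := h2
      have hre1 : (X ((φ k).comp (mulLinMap (a' k) (c' k)))).re -
          ((φ k).comp (mulLinMap (a' k) (c' k)) x).re ≤
          ‖(φ k).comp (mulLinMap (a' k) (c' k)) x -
            X ((φ k).comp (mulLinMap (a' k) (c' k)))‖ := by
        have h5 := Complex.abs_re_le_norm ((φ k).comp (mulLinMap (a' k) (c' k)) x -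
          X ((φ k).comp (mulLinMap (a' k) (c' k))))
        rw [Complex.sub_re] at h5
        have h6 := abs_le.1 h5
        linarith [h6.1]
      have hXg : X ((φ k).comp (mulLinMap (a' k) (c' k))) =
          clmDoubleTranspose (mulLinMap (a' k) (c' k)) X (φ k) := rfl
      have hφ2' := hφ2 k
      rw [← hXg] at hφ2'
      have hgle : ((φ k).comp (mulLinMap (a' k) (c' k)) x).re ≤ ‖a' k * x + x * c' k‖ := by
        have h7 : ((φ k).comp (mulLinMap (a' k) (c' k)) x).re ≤
            ‖(φ k).comp (mulLinMap (a' k) (c' k)) x‖ := by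
          exact Complex.re_le_norm _
        have h8 : ‖(φ k).comp (mulLinMap (a' k) (c' k)) x‖ ≤ ‖a' k * x + x * c' k‖ := by
          calc ‖(φ k) (mulLinMap (a' k) (c' k) x)‖
              ≤ ‖φ k‖ * ‖mulLinMap (a' k) (c' k) x‖ := ContinuousLinearMap.le_opNorm _ _
            _ ≤ 1 * ‖mulLinMap (a' k) (c' k) x‖ :=
                mul_le_mul_of_nonneg_right (hφ1 k) (norm_nonneg _)
            _ = ‖a' k * x + x * c' k‖ := by rw [one_mul, Stmt5Aux.mulLinMap_apply]
        exact h7.trans h8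
      have hNx : ‖clmDoubleTranspose (mulLinMap (a' k) (c' k)) X‖ - 2*(ε/6) <
          ‖a' k * x + x * c' k‖ := by linarith
      have hmax : max (r k - ‖a' k * x + x * c' k‖) 0 ≤
          max (r k - ‖clmDoubleTranspose (mulLinMap (a' k) (c' k)) X‖) 0 + 2*(ε/6) := by
        apply max_le
        · have : r k - ‖a' k * x + x * c' k‖ ≤
              (r k - ‖clmDoubleTranspose (mulLinMap (a' k) (c' k)) X‖) + 2*(ε/6) := by linarith
          exact this.trans (add_le_add_left (le_max_left _ _) _)
        · positivity
      refine hmax.trans (add_le_add_left ?_ _)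
      exact le_ciSup (f := fun k : Fin n =>
        max (r k - ‖clmDoubleTranspose (mulLinMap (a' k) (c' k)) X‖) 0)
        (Set.Finite.bddAbove (Set.finite_range _)) k
    have := add_le_add hA1 hA2
    linarith
end

section
/- Let E and F be complex Banach spaces, let m ≥ 1, and let T_1, …, T_m : E → F be bounded linear maps, with double transposes T_j** : E** → F**. Suppose X ∈ E** satisfies ‖X‖ ≤ 1 and for each j ≤ m there is y_j ∈ F with T_j**(X) = ι_F(y_j), where ι_F : F → F** is the canonical embedding. Then for every ε > 0 there exists x ∈ E with ‖x‖ ≤ 1 and ‖T_j x − y_j‖ < ε for all j ≤ m. -/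
open NormedSpace

/-- If `T₁, …, T_m : E → F` are bounded linear maps between complex Banach
spaces and `X ∈ E**` has norm at most `1` and satisfies `T_j**(X) = ι_F(y_j)` with `y_j ∈ F`
for all `j ≤ m`, then for every `ε > 0` there is `x` in the unit ball of `E` with
`‖T_j x - y_j‖ < ε` for all `j ≤ m`. -/
theorem stmt_6 (E F : Type*)
    [NormedAddCommGroup E] [NormedSpace ℂ E] [CompleteSpace E]
    [NormedAddCommGroup F] [NormedSpace ℂ F] [CompleteSpace F]
    (m : ℕ) (hm : 1 ≤ m) (T : Fin m → (E →L[ℂ] F)) (y : Fin m → F)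
    (X : StrongDual ℂ (StrongDual ℂ E)) (hX : ‖X‖ ≤ 1)
    (hTX : ∀ j, clmDoubleTranspose (T j) X = inclusionInDoubleDual ℂ F (y j)) :
    ∀ ε : ℝ, 0 < ε → ∃ x : E, ‖x‖ ≤ 1 ∧ ∀ j, ‖T j x - y j‖ < ε := by
  classical
  intro ε hε
  by_contra hcon
  push_neg at hcon
  set S : E →L[ℂ] (Fin m → F) := ContinuousLinearMap.pi T with hSdef
  set s : Set (Fin m → F) := closure (S '' Metric.closedBall 0 1) with hsdef
  have hconv : Convex ℝ s :=
    ((convex_closedBall (0:E) 1).linear_image ((S.toLinearMap).restrictScalars ℝ)).closure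
  have hy : y ∉ s := by
    intro hy
    obtain ⟨z, hzs, hdz⟩ := Metric.mem_closure_iff.mp hy ε hε
    obtain ⟨x, hx, rfl⟩ := hzs
    obtain ⟨j, hj⟩ := hcon x (by simpa using hx)
    have h1 : ‖T j x - y j‖ ≤ ‖S x - y‖ := by
      simpa [hSdef] using norm_le_pi_norm (S x - y) j
    rw [dist_eq_norm, ← norm_neg, neg_sub] at hdz
    linarith
  obtain ⟨f, u, hfs, hfy⟩ := geometric_hahn_banach_closed_point hconv isClosed_closure hy
  have hu : 0 < u := by
    have h0 : (0 : Fin m → F) ∈ s :=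
      subset_closure ⟨0, by simp, by simp⟩
    simpa using hfs 0 h0
  -- component functionals and their complexifications
  let fc : Fin m → (F →L[ℝ] ℝ) := fun j =>
    f.comp ⟨LinearMap.single ℝ (fun _ => F) j, continuous_single (A := fun _ => F) j⟩
  let φ : Fin m → (F →L[ℂ] ℂ) := fun j => (fc j).extendTo𝕜'
  have hre : ∀ j (v : F), (φ j v).re = fc j v := by
    intro j v
    exact StrongDual.re_extendRCLike_apply (𝕜 := ℂ) (fc j) v
  have hfdec : ∀ w : Fin m → F, f w = ∑ j, fc j (w j) := by
    intro w
    have hw : w = ∑ j, Pi.single j (w j) := by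
      funext i
      rw [Finset.sum_apply]
      exact (Fintype.sum_pi_single i w).symm
    conv_lhs => rw [hw]
    rw [map_sum]
    exact Finset.sum_congr rfl fun j _ => rfl
  -- the combined functional
  let g : StrongDual ℂ E := ∑ j, clmTranspose (T j) (φ j)
  have hgz : ∀ z : E, g z = ∑ j, φ j (T j z) := by
    intro z
    simp [g, ContinuousLinearMap.sum_apply, clmTranspose]
  have hgre : ∀ z : E, (g z).re = f (S z) := by
    intro z
    rw [hgz, Complex.re_sum, hfdec (S z)]
    refine Finset.sum_congr rfl fun j _ => ?_
    rw [hre]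
    simp [hSdef]
  have hball : ∀ z : E, ‖z‖ ≤ 1 → (g z).re < u := by
    intro z hz
    rw [hgre]
    exact hfs _ (subset_closure ⟨z, by simpa using hz, rfl⟩)
  have hgnorm : ‖g‖ ≤ u := by
    refine ContinuousLinearMap.opNorm_le_bound g hu.le fun x => ?_
    rcases eq_or_ne (g x) 0 with h0 | h0
    · rw [h0, norm_zero]
      positivity
    · have hx0 : x ≠ 0 := fun h => h0 (by simp [h])
      have hxn : (0:ℝ) < ‖x‖ := norm_pos_iff.mpr hx0
      set c : ℂ := (‖g x‖ : ℂ) / g x with hc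
      have hcval : c * g x = (‖g x‖ : ℂ) := by
        rw [hc, div_mul_cancel₀ _ h0]
      have hcnorm : ‖c‖ = 1 := by
        rw [hc, norm_div, Complex.norm_real, norm_norm, div_self (norm_ne_zero_iff.mpr h0)]
      have hn : ‖((‖x‖ : ℂ)⁻¹ * c) • x‖ ≤ 1 := by
        rw [norm_smul, norm_mul, norm_inv, Complex.norm_real, norm_norm, hcnorm]
        field_simp
        exact le_rfl
      have hkey : g (((‖x‖ : ℂ)⁻¹ * c) • x) = ((‖x‖⁻¹ * ‖g x‖ : ℝ) : ℂ) := by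
        rw [map_smul, smul_eq_mul, mul_assoc, hcval]
        push_cast
        ring
      have := hball _ hn
      rw [hkey, Complex.ofReal_re] at this
      have h2 : ‖g x‖ < u * ‖x‖ := by
        rw [inv_mul_lt_iff₀ hxn] at this
        linarith [this]
      linarith
  have hXg : X g = ∑ j, φ j (y j) := by
    simp only [g, map_sum]
    refine Finset.sum_congr rfl fun j _ => ?_
    have h1 : X (clmTranspose (T j) (φ j)) = clmDoubleTranspose (T j) X (φ j) := rfl
    rw [h1, hTX j, dual_def]
  have hfy2 : (X g).re = f y := by
    rw [hXg, Complex.re_sum, hfdec y]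
    exact Finset.sum_congr rfl fun j _ => hre j (y j)
  have hle : (X g).re ≤ u := by
    calc (X g).re ≤ ‖X g‖ := Complex.re_le_norm _
      _ ≤ ‖X‖ * ‖g‖ := X.le_opNorm g
      _ ≤ 1 * u := mul_le_mul hX hgnorm (norm_nonneg g) zero_le_one
      _ = u := one_mul u
  rw [hfy2] at hle
  linarith
end
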